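/- The ternary quartic form p_3(x,y,z) = 4(x^4 + y^4 + z^4) - 17(x^2 y^2 + x^2 z^2 + y^2 z^2) is irreducible over the real numbers. -/

import Mathlib

open MvPolynomial

noncomputable def p3 : MvPolynomial (Fin 3) ℝ :=
  4 * (X 0 ^ 4 + X 1 ^ 4 + X 2 ^ 4)
    - 17 * (X 0 ^ 2 * X 1 ^ 2 + X 0 ^ 2 * X 2 ^ 2 + X 1 ^ 2 * X 2 ^ 2)

section Homogenization

/-- The homogenization map recording total degree in an auxiliary `Polynomial` variable. -/
noncomputable def hmz : MvPolynomial (Fin 3) ℝ →ₐ[ℝ] Polynomial (MvPolynomial (Fin 3) ℝ) :=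
  aeval (fun i => Polynomial.C (X i) * Polynomial.X)

lemma hmz_monomial (d : Fin 3 →₀ ℕ) (c : ℝ) :
    hmz (monomial d c) = Polynomial.C (monomial d c) * Polynomial.X ^ (Finsupp.degree d) := by
  have h1 : hmz (monomial d c)
      = Polynomial.C (C c) * ∏ i ∈ d.support, (Polynomial.C (X i) * Polynomial.X) ^ d i := by
    rw [monomial_eq, Finsupp.prod]
    simp only [hmz, map_mul, aeval_C, map_prod, map_pow, aeval_X]
    rw [Polynomial.algebraMap_apply, MvPolynomial.algebraMap_eq]
  rw [h1]
  have h2 : ∀ i ∈ d.support, (Polynomial.C (X i : MvPolynomial (Fin 3) ℝ) * Polynomial.X) ^ d i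
      = Polynomial.C (X i ^ d i) * Polynomial.X ^ d i := by
    intro i _; rw [mul_pow, Polynomial.C_pow]
  rw [Finset.prod_congr rfl h2, Finset.prod_mul_distrib, ← map_prod,
    Finset.prod_pow_eq_pow_sum, ← mul_assoc, ← map_mul, monomial_eq, Finsupp.prod]
  rfl

lemma hmz_coeff (f : MvPolynomial (Fin 3) ℝ) (k : ℕ) :
    (hmz f).coeff k = homogeneousComponent k f := by
  induction f using MvPolynomial.induction_on' with
  | add p q hp hq => simp [map_add, hp, hq]
  | monomial d c =>
    rw [hmz_monomial, homogeneousComponent_of_mem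
      ((mem_homogeneousSubmodule _ _).2 (isHomogeneous_monomial c rfl))]
    simp [Polynomial.coeff_X_pow, eq_comm]

lemma hmz_eval_one (f : MvPolynomial (Fin 3) ℝ) :
    Polynomial.eval (1 : MvPolynomial (Fin 3) ℝ) (hmz f) = f := by
  have : (Polynomial.evalRingHom (1 : MvPolynomial (Fin 3) ℝ)).comp
      (hmz : MvPolynomial (Fin 3) ℝ →+* _) = RingHom.id _ := by
    apply MvPolynomial.ringHom_ext
    · intro r; simp [hmz]
    · intro i; simp [hmz]
  exact congrArg (fun h => h f) (congrArg DFunLike.coe this)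

lemma isHomogeneous_of_hmz {f : MvPolynomial (Fin 3) ℝ} {a : ℕ}
    (h : hmz f = Polynomial.C f * Polynomial.X ^ a) : f.IsHomogeneous a := by
  have h2 : homogeneousComponent a f = f := by
    rw [← hmz_coeff, h]
    simp [Polynomial.coeff_X_pow]
  rw [← h2]
  exact homogeneousComponent_isHomogeneous a f

lemma hmz_of_isHomogeneous {f : MvPolynomial (Fin 3) ℝ} {n : ℕ} (h : f.IsHomogeneous n) :
    hmz f = Polynomial.C f * Polynomial.X ^ n := by
  ext k
  rw [hmz_coeff, homogeneousComponent_of_mem ((mem_homogeneousSubmodule _ _).2 h)]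
  simp [Polynomial.coeff_X_pow, eq_comm]

lemma factors_homogeneous {f g : MvPolynomial (Fin 3) ℝ} {n : ℕ}
    (h : (f * g).IsHomogeneous n) (hf : f ≠ 0) (hg : g ≠ 0) :
    ∃ a b, a + b = n ∧ f.IsHomogeneous a ∧ g.IsHomogeneous b := by
  have hfg0 : f * g ≠ 0 := mul_ne_zero hf hg
  have hF : hmz f ≠ 0 := fun h0 => hf (by rw [← hmz_eval_one f, h0, Polynomial.eval_zero])
  have hG : hmz g ≠ 0 := fun h0 => hg (by rw [← hmz_eval_one g, h0, Polynomial.eval_zero])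
  have hmul : hmz f * hmz g = Polynomial.C (f * g) * Polynomial.X ^ n := by
    rw [← map_mul, hmz_of_isHomogeneous h]
  have hdeg : (hmz f).natDegree + (hmz g).natDegree = n := by
    rw [← Polynomial.natDegree_mul hF hG, hmul, Polynomial.C_mul_X_pow_eq_monomial,
      Polynomial.natDegree_monomial]
    simp [hfg0]
  have htdeg : (hmz f).natTrailingDegree + (hmz g).natTrailingDegree = n := by
    rw [← Polynomial.natTrailingDegree_mul hF hG, hmul]
    rw [Polynomial.C_mul_X_pow_eq_monomial, Polynomial.natTrailingDegree_monomial hfg0]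
  have h1 : (hmz f).natTrailingDegree = (hmz f).natDegree := by
    have := Polynomial.natTrailingDegree_le_natDegree (hmz f)
    have := Polynomial.natTrailingDegree_le_natDegree (hmz g)
    omega
  have h2 : (hmz g).natTrailingDegree = (hmz g).natDegree := by
    have := Polynomial.natTrailingDegree_le_natDegree (hmz f)
    have := Polynomial.natTrailingDegree_le_natDegree (hmz g)
    omega
  refine ⟨(hmz f).natDegree, (hmz g).natDegree, hdeg, ?_, ?_⟩
  · apply isHomogeneous_of_hmz
    have hf' : hmz f = Polynomial.C ((hmz f).coeff (hmz f).natDegree) *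
        Polynomial.X ^ (hmz f).natDegree := by
      ext k
      simp only [Polynomial.coeff_C_mul, Polynomial.coeff_X_pow]
      rcases lt_trichotomy k (hmz f).natDegree with hk | hk | hk
      · rw [Polynomial.coeff_eq_zero_of_lt_natTrailingDegree (by omega), if_neg (by omega),
          mul_zero]
      · simp [hk]
      · rw [Polynomial.coeff_eq_zero_of_natDegree_lt hk, if_neg (by omega), mul_zero]
    have : (hmz f).coeff (hmz f).natDegree = f := by
      conv_rhs => rw [← hmz_eval_one f]
      rw [hf']
      simp
    rwa [this] at hf'
  · apply isHomogeneous_of_hmz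
    have hg' : hmz g = Polynomial.C ((hmz g).coeff (hmz g).natDegree) *
        Polynomial.X ^ (hmz g).natDegree := by
      ext k
      simp only [Polynomial.coeff_C_mul, Polynomial.coeff_X_pow]
      rcases lt_trichotomy k (hmz g).natDegree with hk | hk | hk
      · rw [Polynomial.coeff_eq_zero_of_lt_natTrailingDegree (by omega), if_neg (by omega),
          mul_zero]
      · simp [hk]
      · rw [Polynomial.coeff_eq_zero_of_natDegree_lt hk, if_neg (by omega), mul_zero]
    have : (hmz g).coeff (hmz g).natDegree = g := by
      conv_rhs => rw [← hmz_eval_one g]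
      rw [hg']
      simp
    rwa [this] at hg'

end Homogenization

section Repr

lemma fin3_finsupp_eq_iff (m n : Fin 3 →₀ ℕ) : m = n ↔ m 0 = n 0 ∧ m 1 = n 1 ∧ m 2 = n 2 := by
  constructor
  · rintro rfl; exact ⟨rfl, rfl, rfl⟩
  · rintro ⟨h0, h1, h2⟩; ext i; fin_cases i <;> assumption

lemma fin3_eq (m : Fin 3 →₀ ℕ) :
    m = Finsupp.single 0 (m 0) + Finsupp.single 1 (m 1) + Finsupp.single 2 (m 2) := by
  ext i; fin_cases i <;> simp [Finsupp.single_apply]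

lemma deg3 (m : Fin 3 →₀ ℕ) : Finsupp.degree m = m 0 + m 1 + m 2 := by
  rw [Finsupp.degree_apply, Finset.sum_subset (Finset.subset_univ m.support)
    (fun i _ hi => by simpa using (Finsupp.notMem_support_iff.1 hi))]
  exact Fin.sum_univ_three m

lemma repr0 {f : MvPolynomial (Fin 3) ℝ} (h : f.IsHomogeneous 0) : f = C (coeff 0 f) := by
  ext m
  by_cases hm : m = 0
  · subst hm; simp
  · rw [h.coeff_eq_zero (by simpa [Finsupp.degree_eq_zero_iff] using hm), coeff_C,
      if_neg (Ne.symm hm)]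

lemma repr1 {f : MvPolynomial (Fin 3) ℝ} (h : f.IsHomogeneous 1) :
    f = monomial (Finsupp.single 0 1) (coeff (Finsupp.single 0 1) f)
      + monomial (Finsupp.single 1 1) (coeff (Finsupp.single 1 1) f)
      + monomial (Finsupp.single 2 1) (coeff (Finsupp.single 2 1) f) := by
  ext m
  simp only [coeff_add, coeff_monomial]
  by_cases hdeg : m 0 + m 1 + m 2 = 1
  · have hcase : (m 0 = 1 ∧ m 1 = 0 ∧ m 2 = 0) ∨ (m 0 = 0 ∧ m 1 = 1 ∧ m 2 = 0) ∨
        (m 0 = 0 ∧ m 1 = 0 ∧ m 2 = 1) := by omega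
    rcases hcase with ⟨h0, h1, h2⟩ | ⟨h0, h1, h2⟩ | ⟨h0, h1, h2⟩
    · have hm : m = Finsupp.single 0 1 := by
        conv_lhs => rw [fin3_eq m, h0, h1, h2]
        simp
      subst hm
      simp [fin3_finsupp_eq_iff, Finsupp.single_apply]
    · have hm : m = Finsupp.single 1 1 := by
        conv_lhs => rw [fin3_eq m, h0, h1, h2]
        simp
      subst hm
      simp [fin3_finsupp_eq_iff, Finsupp.single_apply]
    · have hm : m = Finsupp.single 2 1 := by
        conv_lhs => rw [fin3_eq m, h0, h1, h2]
        simp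
      subst hm
      simp [fin3_finsupp_eq_iff, Finsupp.single_apply]
  · rw [if_neg (fun heq => hdeg (by rw [← heq]; simp [Finsupp.single_apply])),
      if_neg (fun heq => hdeg (by rw [← heq]; simp [Finsupp.single_apply])),
      if_neg (fun heq => hdeg (by rw [← heq]; simp [Finsupp.single_apply]))]
    simp only [add_zero]
    exact h.coeff_eq_zero (by rw [deg3]; exact hdeg)

lemma repr2 {f : MvPolynomial (Fin 3) ℝ} (h : f.IsHomogeneous 2) :
    f = monomial (Finsupp.single 0 2) (coeff (Finsupp.single 0 2) f)
      + monomial (Finsupp.single 1 2) (coeff (Finsupp.single 1 2) f)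
      + monomial (Finsupp.single 2 2) (coeff (Finsupp.single 2 2) f)
      + monomial (Finsupp.single 0 1 + Finsupp.single 1 1)
          (coeff (Finsupp.single 0 1 + Finsupp.single 1 1) f)
      + monomial (Finsupp.single 0 1 + Finsupp.single 2 1)
          (coeff (Finsupp.single 0 1 + Finsupp.single 2 1) f)
      + monomial (Finsupp.single 1 1 + Finsupp.single 2 1)
          (coeff (Finsupp.single 1 1 + Finsupp.single 2 1) f) := by
  ext m
  simp only [coeff_add, coeff_monomial]
  by_cases hdeg : m 0 + m 1 + m 2 = 2
  · have hcase : (m 0 = 2 ∧ m 1 = 0 ∧ m 2 = 0) ∨ (m 0 = 0 ∧ m 1 = 2 ∧ m 2 = 0) ∨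
        (m 0 = 0 ∧ m 1 = 0 ∧ m 2 = 2) ∨ (m 0 = 1 ∧ m 1 = 1 ∧ m 2 = 0) ∨
        (m 0 = 1 ∧ m 1 = 0 ∧ m 2 = 1) ∨ (m 0 = 0 ∧ m 1 = 1 ∧ m 2 = 1) := by omega
    rcases hcase with ⟨h0, h1, h2⟩ | ⟨h0, h1, h2⟩ | ⟨h0, h1, h2⟩ | ⟨h0, h1, h2⟩ |
      ⟨h0, h1, h2⟩ | ⟨h0, h1, h2⟩
    · have hm : m = Finsupp.single 0 2 := by
        conv_lhs => rw [fin3_eq m, h0, h1, h2]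
        simp
      subst hm
      simp [fin3_finsupp_eq_iff, Finsupp.single_apply, Finsupp.add_apply]
    · have hm : m = Finsupp.single 1 2 := by
        conv_lhs => rw [fin3_eq m, h0, h1, h2]
        simp
      subst hm
      simp [fin3_finsupp_eq_iff, Finsupp.single_apply, Finsupp.add_apply]
    · have hm : m = Finsupp.single 2 2 := by
        conv_lhs => rw [fin3_eq m, h0, h1, h2]
        simp
      subst hm
      simp [fin3_finsupp_eq_iff, Finsupp.single_apply, Finsupp.add_apply]
    · have hm : m = Finsupp.single 0 1 + Finsupp.single 1 1 := by
        conv_lhs => rw [fin3_eq m, h0, h1, h2]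
        simp
      subst hm
      simp [fin3_finsupp_eq_iff, Finsupp.single_apply, Finsupp.add_apply]
    · have hm : m = Finsupp.single 0 1 + Finsupp.single 2 1 := by
        conv_lhs => rw [fin3_eq m, h0, h1, h2]
        simp
      subst hm
      simp [fin3_finsupp_eq_iff, Finsupp.single_apply, Finsupp.add_apply]
    · have hm : m = Finsupp.single 1 1 + Finsupp.single 2 1 := by
        conv_lhs => rw [fin3_eq m, h0, h1, h2]
        simp
      subst hm
      simp [fin3_finsupp_eq_iff, Finsupp.single_apply, Finsupp.add_apply]
  · rw [if_neg (fun heq => hdeg (by rw [← heq]; simp [Finsupp.single_apply])),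
      if_neg (fun heq => hdeg (by rw [← heq]; simp [Finsupp.single_apply])),
      if_neg (fun heq => hdeg (by rw [← heq]; simp [Finsupp.single_apply])),
      if_neg (fun heq => hdeg (by rw [← heq]; simp [Finsupp.single_apply])),
      if_neg (fun heq => hdeg (by rw [← heq]; simp [Finsupp.single_apply])),
      if_neg (fun heq => hdeg (by rw [← heq]; simp [Finsupp.single_apply]))]
    simp only [add_zero]
    exact h.coeff_eq_zero (by rw [deg3]; exact hdeg)

end Repr

section Scalar

lemma linear_scalar {a b c : ℝ}
    (h1 : 4*c^4 + 4*a^4 - 17*a^2*c^2 = 0)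
    (h2 : 4*c^4 + 4*b^4 - 17*b^2*c^2 = 0)
    (h3 : 4*b^4 + 4*a^4 - 17*a^2*b^2 = 0)
    (hne : ¬(a = 0 ∧ b = 0 ∧ c = 0)) : False := by
  by_cases ha : a = 0
  · subst ha
    have hc : c = 0 := by
      have h : c^4 = 0 := by linarith
      exact pow_eq_zero_iff (by norm_num) |>.1 h
    subst hc
    have hb : b = 0 := by
      have h : b^4 = 0 := by linarith
      exact pow_eq_zero_iff (by norm_num) |>.1 h
    exact hne ⟨rfl, hb, rfl⟩
  have hc : c ≠ 0 := by
    intro hc; subst hc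
    exact ha (pow_eq_zero_iff (n := 4) (by norm_num) |>.1 (by linarith))
  have hb : b ≠ 0 := by
    intro hb; subst hb
    exact ha (pow_eq_zero_iff (n := 4) (by norm_num) |>.1 (by linarith))
  have hc4 : 0 < c^4 := by positivity
  have f1 : (4*a^2 - c^2) * (a^2 - 4*c^2) = 0 := by linear_combination h1
  have f2 : (4*b^2 - c^2) * (b^2 - 4*c^2) = 0 := by linear_combination h2
  rcases mul_eq_zero.1 f1 with hA | hA <;> rcases mul_eq_zero.1 f2 with hB | hB <;>
    nlinarith [hA, hB, h3, hc4, sq_nonneg (a*b), sq_nonneg (a^2 - b^2), sq_nonneg (a^2+b^2)]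

lemma quad_scalar {a1 a2 a3 a4 a5 a6 b1 b2 b3 b4 b5 b6 : ℝ}
    (e1 : a1*b1 = 4) (e2 : a2*b2 = 4) (e3 : a3*b3 = 4)
    (e4 : a1*b4 + a4*b1 = 0) (e5 : a1*b5 + a5*b1 = 0) (e6 : a2*b4 + a4*b2 = 0)
    (e7 : a2*b6 + a6*b2 = 0) (e8 : a3*b5 + a5*b3 = 0) (e9 : a3*b6 + a6*b3 = 0)
    (e10 : a1*b2 + a2*b1 + a4*b4 = -17) (e11 : a1*b3 + a3*b1 + a5*b5 = -17)
    (e12 : a2*b3 + a3*b2 + a6*b6 = -17)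
    (e13 : a1*b6 + a6*b1 + a4*b5 + a5*b4 = 0)
    (e14 : a2*b5 + a5*b2 + a4*b6 + a6*b4 = 0)
    (e15 : a3*b4 + a4*b3 + a5*b6 + a6*b5 = 0) : False := by
  have ha1 : a1 ≠ 0 := fun h => by rw [h] at e1; norm_num at e1
  have ha2 : a2 ≠ 0 := fun h => by rw [h] at e2; norm_num at e2
  have ha3 : a3 ≠ 0 := fun h => by rw [h] at e3; norm_num at e3
  have hz : a5 = 0 ∧ a6 = 0 := by
    by_contra hcon
    obtain ⟨t, hb3⟩ : ∃ t, b3 = t * a3 := ⟨b3 / a3, by field_simp⟩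
    have hta : t * a3^2 = 4 := by linear_combination e3 - a3 * hb3
    have ht : 0 < t := by nlinarith [hta, sq_nonneg a3]
    have hb5 : b5 = -(t * a5) := by
      have h : a3 * (b5 + t * a5) = 0 := by linear_combination e8 - a5 * hb3
      have := (mul_eq_zero.1 h).resolve_left ha3
      linarith
    have hb6 : b6 = -(t * a6) := by
      have h : a3 * (b6 + t * a6) = 0 := by linear_combination e9 - a6 * hb3
      have := (mul_eq_zero.1 h).resolve_left ha3
      linarith
    have hmain : b1 = t * a1 ∧ b2 = t * a2 ∧ b4 = t * a4 := by
      obtain h5 | ⟨h5, h6⟩ : a5 ≠ 0 ∨ (a5 = 0 ∧ a6 ≠ 0) := by tauto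
      · have hb1 : b1 = t * a1 := by
          have h : a5 * (b1 - t * a1) = 0 := by linear_combination e5 - a1 * hb5
          have := (mul_eq_zero.1 h).resolve_left h5
          linarith
        have hb4 : b4 = t * a4 := by
          have h : a5 * (b4 - t * a4) = 0 := by
            linear_combination e13 - a1 * hb6 - a6 * hb1 - a4 * hb5
          have := (mul_eq_zero.1 h).resolve_left h5
          linarith
        have hb2 : b2 = t * a2 := by
          have h : a5 * (b2 - t * a2) = 0 := by
            linear_combination e14 - a2 * hb5 - a4 * hb6 - a6 * hb4
          have := (mul_eq_zero.1 h).resolve_left h5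
          linarith
        exact ⟨hb1, hb2, hb4⟩
      · subst h5
        have hb5' : b5 = 0 := by rw [hb5]; ring
        have hb2 : b2 = t * a2 := by
          have h : a6 * (b2 - t * a2) = 0 := by linear_combination e7 - a2 * hb6
          have := (mul_eq_zero.1 h).resolve_left h6
          linarith
        have hb1 : b1 = t * a1 := by
          have h : a6 * (b1 - t * a1) = 0 := by
            linear_combination e13 - a1 * hb6 - a4 * hb5'
          have := (mul_eq_zero.1 h).resolve_left h6
          linarith
        have hb4 : b4 = t * a4 := by
          have h : a6 * (b4 - t * a4) = 0 := by
            linear_combination e14 - a2 * hb5' - a4 * hb6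
          have := (mul_eq_zero.1 h).resolve_left h6
          linarith
        exact ⟨hb1, hb2, hb4⟩
    obtain ⟨hb1, hb2, hb4⟩ := hmain
    have key : t * (a1 + a2 + a4)^2 = -9 := by
      linear_combination e1 + e2 + e4 + e6 + e10 - (a1 + a2 + a4) * hb1 -
        (a1 + a2 + a4) * hb2 - (a1 + a2 + a4) * hb4
    nlinarith [key, ht, sq_nonneg (a1 + a2 + a4)]
  obtain ⟨h5, h6⟩ := hz
  subst h5; subst h6
  have hb5 : b5 = 0 :=
    (mul_eq_zero.1 (by linarith [e8] : a3 * b5 = 0)).resolve_left ha3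
  have hb6 : b6 = 0 :=
    (mul_eq_zero.1 (by linarith [e9] : a3 * b6 = 0)).resolve_left ha3
  subst hb5; subst hb6
  have hz4 : a4 = 0 := by
    by_contra h4
    obtain ⟨s, hb1⟩ : ∃ s, b1 = s * a1 := ⟨b1 / a1, by field_simp⟩
    have hsa : s * a1^2 = 4 := by linear_combination e1 - a1 * hb1
    have hs : 0 < s := by nlinarith [hsa, sq_nonneg a1]
    have hb4 : b4 = -(s * a4) := by
      have h : a1 * (b4 + s * a4) = 0 := by linear_combination e4 - a4 * hb1
      have := (mul_eq_zero.1 h).resolve_left ha1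
      linarith
    have hb2 : b2 = s * a2 := by
      have h : a4 * (b2 - s * a2) = 0 := by linear_combination e6 - a2 * hb4
      have := (mul_eq_zero.1 h).resolve_left h4
      linarith
    have hb3 : b3 = s * a3 := by
      have h : a4 * (b3 - s * a3) = 0 := by linear_combination e15 - a3 * hb4
      have := (mul_eq_zero.1 h).resolve_left h4
      linarith
    have key : s * (a2 + a3)^2 = -9 := by
      linear_combination e2 + e3 + e12 - (a2 + a3) * hb2 - (a2 + a3) * hb3
    nlinarith [key, hs, sq_nonneg (a2 + a3)]
  subst hz4
  have hb4 : b4 = 0 :=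
    (mul_eq_zero.1 (by linarith [e4] : a1 * b4 = 0)).resolve_left ha1
  subst hb4
  have huv12 : (a1*b2) * (a2*b1) = 16 := by linear_combination a2*b2*e1 + 4*e2
  have huv13 : (a1*b3) * (a3*b1) = 16 := by linear_combination a3*b3*e1 + 4*e3
  have huv23 : (a2*b3) * (a3*b2) = 16 := by linear_combination a3*b3*e2 + 4*e3
  have h12 : a1*b2 < 0 ∧ a2*b1 < 0 := by constructor <;> nlinarith [huv12, e10]
  have h13 : a1*b3 < 0 ∧ a3*b1 < 0 := by constructor <;> nlinarith [huv13, e11]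
  have h23 : a2*b3 < 0 ∧ a3*b2 < 0 := by constructor <;> nlinarith [huv23, e12]
  have hprod : (a1*b2) * (a2*b3) * (a3*b1) = 64 := by
    linear_combination (a2*b2*a3*b3)*e1 + (4*a3*b3)*e2 + 16*e3
  have hneg : (a1*b2) * (a2*b3) * (a3*b1) < 0 :=
    mul_neg_of_pos_of_neg (mul_pos_of_neg_of_neg h12.1 h23.1) h13.2
  linarith

end Scalar

lemma p3_eval (v : Fin 3 → ℝ) :
    eval v p3 = 4 * ((v 0) ^ 4 + (v 1) ^ 4 + (v 2) ^ 4)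
      - 17 * ((v 0) ^ 2 * (v 1) ^ 2 + (v 0) ^ 2 * (v 2) ^ 2 + (v 1) ^ 2 * (v 2) ^ 2) := by
  simp [p3]

lemma p3_ne_zero : p3 ≠ 0 := by
  intro h
  have := p3_eval (fun _ => 1)
  rw [h] at this
  norm_num at this

lemma p3_homogeneous : p3.IsHomogeneous 4 := by
  have hC4 : (4 : MvPolynomial (Fin 3) ℝ) = C 4 := (map_ofNat C 4).symm
  have hC17 : (17 : MvPolynomial (Fin 3) ℝ) = C 17 := (map_ofNat C 17).symm
  have h1 : (X 0 ^ 4 + X 1 ^ 4 + X 2 ^ 4 : MvPolynomial (Fin 3) ℝ).IsHomogeneous 4 :=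
    ((isHomogeneous_X_pow (0 : Fin 3) 4).add (isHomogeneous_X_pow 1 4)).add
      (isHomogeneous_X_pow 2 4)
  have h2 : (X 0 ^ 2 * X 1 ^ 2 + X 0 ^ 2 * X 2 ^ 2 + X 1 ^ 2 * X 2 ^ 2 :
      MvPolynomial (Fin 3) ℝ).IsHomogeneous 4 := by
    have a1 := (isHomogeneous_X_pow (R := ℝ) (0 : Fin 3) 2).mul (isHomogeneous_X_pow 1 2)
    have a2 := (isHomogeneous_X_pow (R := ℝ) (0 : Fin 3) 2).mul (isHomogeneous_X_pow 2 2)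
    have a3 := (isHomogeneous_X_pow (R := ℝ) (1 : Fin 3) 2).mul (isHomogeneous_X_pow 2 2)
    have h := (a1.add a2).add a3
    norm_num at h
    exact h
  rw [p3, hC4, hC17]
  exact (h1.C_mul 4).sub (h2.C_mul 17)

theorem p3_irreducible : Irreducible p3 := by
  constructor
  · intro hu
    obtain ⟨v, hv⟩ := isUnit_iff_exists_inv.1 hu
    have hv0 : v ≠ 0 := by
      intro h; rw [h, mul_zero] at hv; exact zero_ne_one hv
    have h1 : (p3 * v).IsHomogeneous 0 := by rw [hv]; exact isHomogeneous_one _ _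
    obtain ⟨a, b, hab, hpa, -⟩ := factors_homogeneous h1 p3_ne_zero hv0
    have := hpa.inj_right p3_homogeneous p3_ne_zero
    omega
  · intro f g hp
    have hf0 : f ≠ 0 := by rintro rfl; rw [zero_mul] at hp; exact p3_ne_zero hp
    have hg0 : g ≠ 0 := by rintro rfl; rw [mul_zero] at hp; exact p3_ne_zero hp
    have hfg : (f * g).IsHomogeneous 4 := hp ▸ p3_homogeneous
    obtain ⟨df, dg, hsum, hf, hg⟩ := factors_homogeneous hfg hf0 hg0
    -- evaluation identity
    have hev0 : ∀ v : Fin 3 → ℝ, eval v p3 = eval v f * eval v g := by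
      intro v; rw [hp, map_mul]
    by_cases hdf0 : df = 0
    · subst hdf0
      left
      have hcne : coeff 0 f ≠ 0 := fun h => hf0 (by rw [repr0 hf, h, map_zero])
      rw [repr0 hf]
      exact isUnit_iff_exists_inv.2 ⟨C (coeff 0 f)⁻¹,
        by rw [← map_mul, mul_inv_cancel₀ hcne, map_one]⟩
    by_cases hdg0 : dg = 0
    · subst hdg0
      right
      have hcne : coeff 0 g ≠ 0 := fun h => hg0 (by rw [repr0 hg, h, map_zero])
      rw [repr0 hg]
      exact isUnit_iff_exists_inv.2 ⟨C (coeff 0 g)⁻¹,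
        by rw [← map_mul, mul_inv_cancel₀ hcne, map_one]⟩
    exfalso
    -- both degrees ≥ 1
    have hcase : (df = 1 ∧ dg = 3) ∨ (df = 2 ∧ dg = 2) ∨ (df = 3 ∧ dg = 1) := by omega
    rcases hcase with ⟨hdf, hdg⟩ | ⟨hdf, hdg⟩ | ⟨hdf, hdg⟩
    · -- f linear
      subst hdf
      set a := coeff (Finsupp.single 0 1) f with ha
      set b := coeff (Finsupp.single 1 1) f with hb
      set c := coeff (Finsupp.single 2 1) f with hc
      have hfe : ∀ v : Fin 3 → ℝ, eval v f = a * v 0 + b * v 1 + c * v 2 := by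
        intro v
        conv_lhs => rw [repr1 hf]
        simp [eval_monomial, Finsupp.prod_single_index]
        rfl
      have hev : ∀ x y z : ℝ,
          4 * (x ^ 4 + y ^ 4 + z ^ 4) - 17 * (x^2*y^2 + x^2*z^2 + y^2*z^2)
          = (a * x + b * y + c * z) * eval ![x, y, z] g := by
        intro x y z
        have h := hev0 ![x, y, z]
        rw [p3_eval, hfe] at h
        simpa using h
      apply linear_scalar (a := a) (b := b) (c := c)
      · linear_combination hev c 0 (-a)
      · linear_combination hev 0 c (-b)
      · linear_combination hev b (-a) 0
      · rintro ⟨ha0, hb0, hc0⟩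
        apply hf0
        rw [repr1 hf, ← ha, ← hb, ← hc, ha0, hb0, hc0]
        simp
    · -- both quadratic
      subst hdf; subst hdg
      set a1 := coeff (Finsupp.single 0 2) f
      set a2 := coeff (Finsupp.single 1 2) f
      set a3 := coeff (Finsupp.single 2 2) f
      set a4 := coeff (Finsupp.single 0 1 + Finsupp.single 1 1) f
      set a5 := coeff (Finsupp.single 0 1 + Finsupp.single 2 1) f
      set a6 := coeff (Finsupp.single 1 1 + Finsupp.single 2 1) f
      set b1 := coeff (Finsupp.single 0 2) g
      set b2 := coeff (Finsupp.single 1 2) g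
      set b3 := coeff (Finsupp.single 2 2) g
      set b4 := coeff (Finsupp.single 0 1 + Finsupp.single 1 1) g
      set b5 := coeff (Finsupp.single 0 1 + Finsupp.single 2 1) g
      set b6 := coeff (Finsupp.single 1 1 + Finsupp.single 2 1) g
      have hfe : ∀ v : Fin 3 → ℝ, eval v f = a1 * v 0 ^ 2 + a2 * v 1 ^ 2 + a3 * v 2 ^ 2
          + a4 * (v 0 * v 1) + a5 * (v 0 * v 2) + a6 * (v 1 * v 2) := by
        intro v
        conv_lhs => rw [repr2 hf]
        simp [eval_monomial, Finsupp.prod_add_index, Finsupp.prod_single_index, pow_add]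
        rfl
      have hge : ∀ v : Fin 3 → ℝ, eval v g = b1 * v 0 ^ 2 + b2 * v 1 ^ 2 + b3 * v 2 ^ 2
          + b4 * (v 0 * v 1) + b5 * (v 0 * v 2) + b6 * (v 1 * v 2) := by
        intro v
        conv_lhs => rw [repr2 hg]
        simp [eval_monomial, Finsupp.prod_add_index, Finsupp.prod_single_index, pow_add]
        rfl
      have hev : ∀ x y z : ℝ,
          4 * (x ^ 4 + y ^ 4 + z ^ 4) - 17 * (x^2*y^2 + x^2*z^2 + y^2*z^2)
          = (a1 * x^2 + a2 * y^2 + a3 * z^2 + a4 * (x*y) + a5 * (x*z) + a6 * (y*z))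
            * (b1 * x^2 + b2 * y^2 + b3 * z^2 + b4 * (x*y) + b5 * (x*z) + b6 * (y*z)) := by
        intro x y z
        have h := hev0 ![x, y, z]
        rw [p3_eval, hfe, hge] at h
        simpa using h
      refine quad_scalar (a1 := a1) (a2 := a2) (a3 := a3) (a4 := a4) (a5 := a5) (a6 := a6)
        (b1 := b1) (b2 := b2) (b3 := b3) (b4 := b4) (b5 := b5) (b6 := b6)
        ?_ ?_ ?_ ?_ ?_ ?_ ?_ ?_ ?_ ?_ ?_ ?_ ?_ ?_ ?_
      · linear_combination (-1/1 : ℝ) * hev 1 0 0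
      · linear_combination (-1/1 : ℝ) * hev 0 1 0
      · linear_combination (-1/1 : ℝ) * hev 0 0 1
      · linear_combination (1/2 : ℝ) * hev 1 0 0 + (-2/1 : ℝ) * hev 0 1 0 + (-1/1 : ℝ) * hev 1 1 0 + (1/3 : ℝ) * hev 1 (-1) 0 + (1/6 : ℝ) * hev 1 2 0
      · linear_combination (1/2 : ℝ) * hev 1 0 0 + (-2/1 : ℝ) * hev 0 0 1 + (-1/1 : ℝ) * hev 1 0 1 + (1/3 : ℝ) * hev 1 0 (-1) + (1/6 : ℝ) * hev 1 0 2
      · linear_combination (-1/2 : ℝ) * hev 1 0 0 + (2/1 : ℝ) * hev 0 1 0 + (1/2 : ℝ) * hev 1 1 0 + (1/6 : ℝ) * hev 1 (-1) 0 + (-1/6 : ℝ) * hev 1 2 0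
      · linear_combination (1/2 : ℝ) * hev 0 1 0 + (-2/1 : ℝ) * hev 0 0 1 + (-1/1 : ℝ) * hev 0 1 1 + (1/3 : ℝ) * hev 0 1 (-1) + (1/6 : ℝ) * hev 0 1 2
      · linear_combination (-1/2 : ℝ) * hev 1 0 0 + (2/1 : ℝ) * hev 0 0 1 + (1/2 : ℝ) * hev 1 0 1 + (1/6 : ℝ) * hev 1 0 (-1) + (-1/6 : ℝ) * hev 1 0 2
      · linear_combination (-1/2 : ℝ) * hev 0 1 0 + (2/1 : ℝ) * hev 0 0 1 + (1/2 : ℝ) * hev 0 1 1 + (1/6 : ℝ) * hev 0 1 (-1) + (-1/6 : ℝ) * hev 0 1 2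
      · linear_combination (1/1 : ℝ) * hev 1 0 0 + (1/1 : ℝ) * hev 0 1 0 + (-1/2 : ℝ) * hev 1 1 0 + (-1/2 : ℝ) * hev 1 (-1) 0
      · linear_combination (1/1 : ℝ) * hev 1 0 0 + (1/1 : ℝ) * hev 0 0 1 + (-1/2 : ℝ) * hev 1 0 1 + (-1/2 : ℝ) * hev 1 0 (-1)
      · linear_combination (1/1 : ℝ) * hev 0 1 0 + (1/1 : ℝ) * hev 0 0 1 + (-1/2 : ℝ) * hev 0 1 1 + (-1/2 : ℝ) * hev 0 1 (-1)
      · linear_combination (1/1 : ℝ) * hev 1 0 0 + (1/1 : ℝ) * hev 0 1 0 + (1/1 : ℝ) * hev 0 0 1 + (-1/2 : ℝ) * hev 1 1 0 + (-1/2 : ℝ) * hev 1 (-1) 0 + (-1/2 : ℝ) * hev 1 0 1 + (-1/2 : ℝ) * hev 1 0 (-1) + (-1/1 : ℝ) * hev 0 1 (-1) + (1/2 : ℝ) * hev 1 1 (-1) + (1/2 : ℝ) * hev 1 (-1) 1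
      · linear_combination (-1/1 : ℝ) * hev 1 0 0 + (-1/1 : ℝ) * hev 0 1 0 + (-1/1 : ℝ) * hev 0 0 1 + (1/2 : ℝ) * hev 1 1 0 + (1/2 : ℝ) * hev 1 (-1) 0 + (1/1 : ℝ) * hev 1 0 1 + (1/2 : ℝ) * hev 0 1 1 + (1/2 : ℝ) * hev 0 1 (-1) + (-1/2 : ℝ) * hev 1 1 1 + (-1/2 : ℝ) * hev 1 (-1) 1
      · linear_combination (-1/1 : ℝ) * hev 1 0 0 + (-1/1 : ℝ) * hev 0 1 0 + (-1/1 : ℝ) * hev 0 0 1 + (1/1 : ℝ) * hev 1 1 0 + (1/2 : ℝ) * hev 1 0 1 + (1/2 : ℝ) * hev 1 0 (-1) + (1/2 : ℝ) * hev 0 1 1 + (1/2 : ℝ) * hev 0 1 (-1) + (-1/2 : ℝ) * hev 1 1 1 + (-1/2 : ℝ) * hev 1 1 (-1)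
    · -- g linear
      subst hdg
      set a := coeff (Finsupp.single 0 1) g with ha
      set b := coeff (Finsupp.single 1 1) g with hb
      set c := coeff (Finsupp.single 2 1) g with hc
      have hge : ∀ v : Fin 3 → ℝ, eval v g = a * v 0 + b * v 1 + c * v 2 := by
        intro v
        conv_lhs => rw [repr1 hg]
        simp [eval_monomial, Finsupp.prod_single_index]
        rfl
      have hev : ∀ x y z : ℝ,
          4 * (x ^ 4 + y ^ 4 + z ^ 4) - 17 * (x^2*y^2 + x^2*z^2 + y^2*z^2)
          = eval ![x, y, z] f * (a * x + b * y + c * z) := by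
        intro x y z
        have h := hev0 ![x, y, z]
        rw [p3_eval, hge] at h
        simpa using h
      apply linear_scalar (a := a) (b := b) (c := c)
      · linear_combination hev c 0 (-a)
      · linear_combination hev 0 c (-b)
      · linear_combination hev b (-a) 0
      · rintro ⟨ha0, hb0, hc0⟩
        apply hg0
        rw [repr1 hg, ← ha, ← hb, ← hc, ha0, hb0, hc0]
        simp
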